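/- Suppose cos(2w) is nonzero, v > 0, and cos(w) sinh(v) + cos(2w) sinh(2v) = 0. Then cosh(v) = -cos(w)/(2 cos(2w)), and substituting into (3 omega)/(2 lambda) = sin(w) cosh(v) + sin(2w) cosh(2v) yields 4 s^3 + (6 omega/lambda) s^2 - 3 s - 6 omega/lambda = 0, where s = sin(2w). -/

import Mathlib

/-- Reduction of the `N = 3` equilibrium equations: if `cos(2w) ≠ 0`, `v > 0` and
`cos w sinh v + cos 2w sinh 2v = 0`, then `cosh v = -cos w / (2 cos 2w)`, and
substituting into `3ω/(2λ) = sin w cosh v + sin 2w cosh 2v` yields the cubic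
`4 s³ + (6ω/λ) s² - 3 s - 6ω/λ = 0` for `s = sin 2w`. -/
theorem lion_dance_equilibrium_reduction (ω lam w v : ℝ)
    (hω : 0 < ω) (hlam : 0 < lam)
    (hcos2w : Real.cos (2 * w) ≠ 0) (hv : 0 < v)
    (heq2 : Real.cos w * Real.sinh v + Real.cos (2 * w) * Real.sinh (2 * v) = 0) :
    Real.cosh v = -Real.cos w / (2 * Real.cos (2 * w)) ∧
      (3 * ω / (2 * lam) =
          Real.sin w * Real.cosh v + Real.sin (2 * w) * Real.cosh (2 * v) →
        4 * Real.sin (2 * w) ^ 3 + (6 * ω / lam) * Real.sin (2 * w) ^ 2 -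
            3 * Real.sin (2 * w) - 6 * ω / lam = 0) := by
  have hsinh : Real.sinh v ≠ 0 := ne_of_gt (Real.sinh_pos_iff.2 hv)
  have h2v : Real.sinh (2 * v) = 2 * Real.sinh v * Real.cosh v := by
    rw [two_mul, Real.sinh_add]; ring
  have hkey : Real.cos w + 2 * Real.cos (2 * w) * Real.cosh v = 0 := by
    have h : Real.sinh v * (Real.cos w + 2 * Real.cos (2 * w) * Real.cosh v) = 0 := by
      rw [← heq2, h2v]; ring
    exact (mul_eq_zero.1 h).resolve_left hsinh
  have hcosh : Real.cosh v = -Real.cos w / (2 * Real.cos (2 * w)) := by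
    field_simp
    linarith
  refine ⟨hcosh, fun hsub => ?_⟩
  have hc2v : Real.cosh (2 * v) = 2 * Real.cosh v ^ 2 - 1 := by
    rw [Real.cosh_two_mul, Real.cosh_sq']; ring
  have hs2 : Real.sin (2 * w) = 2 * Real.sin w * Real.cos w := Real.sin_two_mul w
  have hc2 : Real.cos (2 * w) = 2 * Real.cos w ^ 2 - 1 := Real.cos_two_mul w
  have hpy2 : Real.sin (2 * w) ^ 2 + Real.cos (2 * w) ^ 2 = 1 :=
    Real.sin_sq_add_cos_sq (2 * w)
  have hlam' : lam ≠ 0 := ne_of_gt hlam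
  rw [hc2v, hcosh] at hsub
  field_simp at hsub
  have T1 : Real.cos (2 * w) *
      (6 * ω * Real.cos (2 * w) ^ 2 -
        lam * Real.sin (2 * w) * (1 - 4 * Real.cos (2 * w) ^ 2)) = 0 := by
    linear_combination 2 * Real.cos (2 * w) * hsub + lam * Real.cos (2 * w) ^ 2 * hs2 -
      lam * Real.sin (2 * w) * Real.cos (2 * w) * hc2
  have hred : 6 * ω * Real.cos (2 * w) ^ 2 -
      lam * Real.sin (2 * w) * (1 - 4 * Real.cos (2 * w) ^ 2) = 0 :=
    (mul_eq_zero.1 T1).resolve_left hcos2w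
  have goal' : 4 * Real.sin (2 * w) ^ 3 * lam + 6 * ω * Real.sin (2 * w) ^ 2 -
      3 * Real.sin (2 * w) * lam - 6 * ω = 0 := by
    linear_combination (-1) * hred + (6 * ω + 4 * lam * Real.sin (2 * w)) * hpy2
  field_simp
  linear_combination goal'
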